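/- Let D be a diagonal matrix with positive diagonal entries and B a nonnegative matrix. Then the spectral radius ρ(D⁻¹B) < 1 if and only if the spectral abscissa μ(−D + B) < 0. -/

import Mathlib

open Matrix Complex Module.End Filter Topology
open scoped ENNReal NNReal

section Stmt8Aux

attribute [local instance] Matrix.linftyOpNormedRing Matrix.linftyOpNormedAlgebra

private lemma spec_iff {n : ℕ} (M : Matrix (Fin n) (Fin n) ℂ) (μ : ℂ) :
    μ ∈ spectrum ℂ M ↔ ∃ x : Fin n → ℂ, x ≠ 0 ∧ M.mulVec x = μ • x := by

  rw [← AlgEquiv.spectrum_eq (Matrix.toLinAlgEquiv' (R := ℂ) (n := Fin n)),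
    ← Module.End.hasEigenvalue_iff_mem_spectrum]
  constructor
  · intro h
    obtain ⟨x, hx⟩ := h.exists_hasEigenvector
    exact ⟨x, hx.2, by simpa [Matrix.toLinAlgEquiv'_apply, Matrix.toLin'_apply]
      using hx.apply_eq_smul⟩
  · rintro ⟨x, hx0, hx⟩
    exact hasEigenvalue_of_hasEigenvector ⟨mem_eigenspace_iff.mpr
      (by simpa [Matrix.toLinAlgEquiv'_apply, Matrix.toLin'_apply] using hx), hx0⟩

private lemma key  {n : ℕ} (K : Matrix (Fin n) (Fin n) ℝ) (hK : ∀ i j, 0 ≤ K i j)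
    (y : Fin n → ℝ) (hy : ∀ i, 0 ≤ y i) {i₀ : Fin n} (hy0 : 0 < y i₀)
    {r : ℝ} (hr : 0 < r) (hKy : ∀ i, r * y i ≤ K.mulVec y i) :
    ∃ ν ∈ spectrum ℂ (K.map Complex.ofReal), r ≤ ‖ν‖ := by
  by_contra hcon
  push_neg at hcon
  -- power bounds
  have hpos : ∀ k : ℕ, ∀ i, r ^ k * y i ≤ (K ^ k).mulVec y i := by
    intro k
    induction k with
    | zero => intro i; simp [Matrix.one_mulVec]
    | succ k ih =>
      intro i
      have h1 : (K ^ (k + 1)).mulVec y = K.mulVec ((K ^ k).mulVec y) := by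
        rw [pow_succ', Matrix.mulVec_mulVec]
      rw [h1]
      have h2 : ∑ j, K i j * (r ^ k * y j) ≤ ∑ j, K i j * ((K ^ k).mulVec y j) :=
        Finset.sum_le_sum fun j _ => mul_le_mul_of_nonneg_left (ih j) (hK i j)
      calc r ^ (k + 1) * y i = r ^ k * (r * y i) := by ring
        _ ≤ r ^ k * (K.mulVec y i) :=
            mul_le_mul_of_nonneg_left (hKy i) (by positivity)
        _ = ∑ j, K i j * (r ^ k * y j) := by
            rw [Matrix.mulVec, dotProduct, Finset.mul_sum]
            exact Finset.sum_congr rfl fun j _ => by ring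
        _ ≤ _ := h2
  set K' : Matrix (Fin n) (Fin n) ℂ := K.map Complex.ofReal with hK'
  haveI : CompleteSpace (Matrix (Fin n) (Fin n) ℂ) := FiniteDimensional.complete ℂ _
  -- spectral radius < r
  have hρ : spectralRadius ℂ K' < ENNReal.ofReal r := by
    rcases Set.eq_empty_or_nonempty (spectrum ℂ K') with he | hne
    · rw [spectralRadius, he]
      simpa using ENNReal.ofReal_pos.mpr hr
    · obtain ⟨z, hz, hz2⟩ := spectrum.exists_nnnorm_eq_spectralRadius_of_nonempty hne
      rw [← hz2, ← ENNReal.ofReal_coe_nnreal, coe_nnnorm,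
        ENNReal.ofReal_lt_ofReal_iff hr]
      exact hcon z hz
  -- pick t with spectralRadius < t, r/2 < t < r
  obtain ⟨t, ht1, ht2⟩ := ENNReal.lt_iff_exists_nnreal_btwn.mp
    (show spectralRadius ℂ K' ⊔ ENNReal.ofReal (r / 2) < ENNReal.ofReal r from
      sup_lt_iff.mpr ⟨hρ, (ENNReal.ofReal_lt_ofReal_iff hr).mpr (by linarith)⟩)
  have htr : (t : ℝ) < r := by
    simpa using (ENNReal.lt_ofReal_iff_toReal_lt ENNReal.coe_ne_top).mp ht2
  have htpos : (0 : ℝ) < t := by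
    have h2 : ENNReal.ofReal (r / 2) < (t : ℝ≥0∞) := lt_of_le_of_lt le_sup_right ht1
    have := (ENNReal.ofReal_lt_coe_iff (by positivity)).mp h2
    linarith
  have hts : spectralRadius ℂ K' < (t : ℝ≥0∞) := lt_of_le_of_lt le_sup_left ht1
  -- Gelfand: eventually ‖K'^k‖ ≤ t^k
  have hG := spectrum.pow_nnnorm_pow_one_div_tendsto_nhds_spectralRadius K'
  have hev : ∀ᶠ k : ℕ in atTop, ‖K' ^ k‖ ≤ (t : ℝ) ^ k := by
    filter_upwards [hG.eventually_lt_const hts, eventually_ge_atTop 1] with k hk hk1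
    have hk' : ((‖K' ^ k‖₊ : ℝ≥0∞) ^ ((1 : ℝ) / k)) ^ (k : ℝ) ≤ ((t : ℝ≥0∞)) ^ (k : ℝ) :=
      ENNReal.rpow_le_rpow hk.le (by positivity)
    rw [← ENNReal.rpow_mul,
      one_div, inv_mul_cancel₀ (by exact_mod_cast Nat.one_le_iff_ne_zero.mp hk1 : (k : ℝ) ≠ 0),
      ENNReal.rpow_one, ENNReal.rpow_natCast, ← ENNReal.coe_pow, ENNReal.coe_le_coe] at hk'
    calc ‖K' ^ k‖ = ((‖K' ^ k‖₊ : ℝ≥0) : ℝ) := rfl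
      _ ≤ ((t ^ k : ℝ≥0) : ℝ) := by exact_mod_cast hk'
      _ = (t : ℝ) ^ k := by push_cast; ring
  -- the vector
  set xh : Fin n → ℂ := fun i => (y i : ℂ) with hxh
  have hvec : ∀ k : ℕ, (K' ^ k).mulVec xh = fun i => (((K ^ k).mulVec y i : ℝ) : ℂ) := by
    intro k
    have hmap : K' ^ k = (K ^ k).map Complex.ofReal := by
      have h0 : K' = Complex.ofRealHom.mapMatrix K := rfl
      rw [h0, ← map_pow]; rfl
    funext i
    rw [hmap]
    simp only [Matrix.mulVec, dotProduct, Matrix.map_apply, hxh]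
    push_cast
    rfl
  have hcontra : ∀ᶠ k : ℕ in atTop, (r / t) ^ k ≤ ‖xh‖ / y i₀ := by
    filter_upwards [hev] with k hk
    have h1 : r ^ k * y i₀ ≤ ‖((K' ^ k).mulVec xh) i₀‖ := by
      rw [hvec k]
      dsimp only
      rw [Complex.norm_real, Real.norm_eq_abs]
      exact le_trans (hpos k i₀) (le_abs_self _)
    have h2 : ‖((K' ^ k).mulVec xh) i₀‖ ≤ ‖(K' ^ k).mulVec xh‖ := by
      exact norm_le_pi_norm _ i₀
    have h3 : ‖(K' ^ k).mulVec xh‖ ≤ ‖K' ^ k‖ * ‖xh‖ := Matrix.linfty_opNorm_mulVec _ _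
    have h4 : r ^ k * y i₀ ≤ (t : ℝ) ^ k * ‖xh‖ := by
      refine le_trans h1 (le_trans h2 (le_trans h3 ?_))
      exact mul_le_mul_of_nonneg_right hk (norm_nonneg _)
    rw [div_pow, div_le_div_iff₀ (by positivity) hy0]
    nlinarith [h4]
  have hdiv : Tendsto (fun k : ℕ => (r / (t : ℝ)) ^ k) atTop atTop :=
    tendsto_pow_atTop_atTop_of_one_lt (by rw [lt_div_iff₀ htpos]; linarith)
  obtain ⟨k, hk1, hk2⟩ := ((hdiv.eventually_gt_atTop (‖xh‖ / y i₀)).and hcontra).exists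
  exact absurd hk2 (not_le.mpr hk1)

private theorem stmt8_aux (n : ℕ) (d : Fin n → ℝ) (hd : ∀ i, 0 < d i)
    (B : Matrix (Fin n) (Fin n) ℝ) (hB : ∀ i j, 0 ≤ B i j) :
    (∀ μ ∈ spectrum ℂ (((Matrix.diagonal d)⁻¹ * B).map Complex.ofReal),
        ‖μ‖ < 1) ↔
      (∀ μ ∈ spectrum ℂ ((-(Matrix.diagonal d) + B).map Complex.ofReal),
        μ.re < 0) := by
  classical
  have hDinv : (Matrix.diagonal d)⁻¹ = Matrix.diagonal (fun i => (d i)⁻¹) := by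
    apply Matrix.inv_eq_right_inv
    rw [Matrix.diagonal_mul_diagonal]
    convert Matrix.diagonal_one with i
    exact mul_inv_cancel₀ (hd i).ne'
  rw [hDinv]
  set M : Matrix (Fin n) (Fin n) ℝ := -(Matrix.diagonal d) + B with hM
  set A : Matrix (Fin n) (Fin n) ℝ := Matrix.diagonal (fun i => (d i)⁻¹) * B with hA
  haveI : CompleteSpace (Matrix (Fin n) (Fin n) ℂ) := FiniteDimensional.complete ℂ _
  constructor
  · -- spectral radius < 1 → Hurwitz
    intro hL μ hμ
    by_contra hre
    push_neg at hre
    obtain ⟨x, hx0, hx⟩ := (spec_iff _ μ).mp hμ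
    have hBx : ∀ i, ∑ j, (B i j : ℂ) * x j = (μ + d i) * x i := by
      intro i
      have h1 := congrFun hx i
      simp only [Matrix.mulVec, dotProduct, Matrix.map_apply, hM,
        Matrix.add_apply, Matrix.neg_apply, Matrix.diagonal_apply, Pi.smul_apply,
        smul_eq_mul, apply_ite, Complex.ofReal_add, Complex.ofReal_neg,
        Complex.ofReal_zero, add_mul, neg_mul, ite_mul, zero_mul] at h1
      rw [Finset.sum_add_distrib] at h1
      simp only [neg_zero, Finset.sum_ite_eq, Finset.mem_univ, if_true] at h1
      linear_combination h1
    set y : Fin n → ℝ := fun i => ‖x i‖ with hy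
    obtain ⟨i₀, hi₀⟩ := Function.ne_iff.mp hx0
    have hy0 : 0 < y i₀ := norm_pos_iff.mpr hi₀
    have hKnn : ∀ i j, 0 ≤ A i j := by
      intro i j
      rw [hA, Matrix.diagonal_mul]
      exact mul_nonneg (inv_nonneg.mpr (hd i).le) (hB i j)
    have hKy : ∀ i, 1 * y i ≤ A.mulVec y i := by
      intro i
      have hsum : d i * y i ≤ ∑ j, B i j * y j := by
        have habs : ‖(μ + d i) * x i‖ ≤ ∑ j, B i j * y j := by
          rw [← hBx i]
          calc ‖∑ j, (B i j : ℂ) * x j‖ ≤ ∑ j, ‖(B i j : ℂ) * x j‖ := by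
                exact norm_sum_le Finset.univ (fun j => (B i j : ℂ) * x j)
            _ = ∑ j, B i j * y j := by
                refine Finset.sum_congr rfl fun j _ => ?_
                rw [norm_mul, Complex.norm_real, Real.norm_eq_abs, _root_.abs_of_nonneg (hB i j)]
        refine le_trans ?_ habs
        rw [norm_mul]
        have h2 : d i ≤ ‖μ + d i‖ := by
          have := Complex.re_le_norm (μ + d i)
          simp only [Complex.add_re, Complex.ofReal_re] at this
          linarith
        exact mul_le_mul_of_nonneg_right h2 (norm_nonneg _)
      have hAy : A.mulVec y i = (d i)⁻¹ * ∑ j, B i j * y j := by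
        rw [hA]
        simp only [Matrix.mulVec, dotProduct, Matrix.diagonal_mul, Finset.mul_sum]
        exact Finset.sum_congr rfl fun j _ => by ring
      rw [hAy, one_mul]
      calc y i = (d i)⁻¹ * (d i * y i) := by
            rw [← mul_assoc, inv_mul_cancel₀ (hd i).ne', one_mul]
        _ ≤ (d i)⁻¹ * ∑ j, B i j * y j :=
            mul_le_mul_of_nonneg_left hsum (inv_nonneg.mpr (hd i).le)
    obtain ⟨ν, hν, hν1⟩ := key A hKnn y (fun i => norm_nonneg _) hy0 one_pos hKy
    exact absurd (hL ν hν) (not_lt.mpr hν1)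
  · -- Hurwitz → spectral radius < 1
    intro hR lam hlam
    by_contra habs1
    push_neg at habs1
    obtain ⟨x, hx0, hx⟩ := (spec_iff _ lam).mp hlam
    have hBx : ∀ i, ∑ j, (B i j : ℂ) * x j = (lam * d i) * x i := by
      intro i
      have h1 := congrFun hx i
      simp only [Matrix.mulVec, dotProduct, Matrix.map_apply, hA,
        Matrix.diagonal_mul, Pi.smul_apply, smul_eq_mul, Complex.ofReal_mul,
        Complex.ofReal_inv] at h1
      have h2 : (d i : ℂ) ≠ 0 := Complex.ofReal_ne_zero.mpr (hd i).ne'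
      have h3 : ∑ j, (B i j : ℂ) * x j = (d i : ℂ) * ∑ j, ((d i : ℂ))⁻¹ * (B i j : ℂ) * x j := by
        rw [Finset.mul_sum]
        refine Finset.sum_congr rfl fun j _ => ?_
        field_simp
      rw [h3, h1]
      ring
    set y : Fin n → ℝ := fun i => ‖x i‖ with hy
    obtain ⟨i₀, hi₀⟩ := Function.ne_iff.mp hx0
    have hy0 : 0 < y i₀ := norm_pos_iff.mpr hi₀
    have hBy : ∀ i, d i * y i ≤ B.mulVec y i := by
      intro i
      have habs : ‖(lam * d i) * x i‖ ≤ B.mulVec y i := by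
        rw [← hBx i]
        calc ‖∑ j, (B i j : ℂ) * x j‖ ≤ ∑ j, ‖(B i j : ℂ) * x j‖ := by
              exact
                norm_sum_le Finset.univ (fun j => (B i j : ℂ) * x j)
          _ = B.mulVec y i := by
              refine Finset.sum_congr rfl fun j _ => ?_
              rw [norm_mul, Complex.norm_real, Real.norm_eq_abs, _root_.abs_of_nonneg (hB i j)]
      refine le_trans ?_ habs
      rw [norm_mul, norm_mul, Complex.norm_real, Real.norm_eq_abs, _root_.abs_of_nonneg (hd i).le]
      have h5 : 1 * (d i * y i) ≤ ‖lam‖ * (d i * y i) :=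
        mul_le_mul_of_nonneg_right habs1 (mul_nonneg (hd i).le (norm_nonneg _))
      rw [one_mul] at h5
      calc d i * y i ≤ ‖lam‖ * (d i * y i) := h5
        _ = ‖lam‖ * d i * y i := by ring
    -- choose s
    obtain ⟨s, hs0, hsd, hsball⟩ : ∃ s : ℝ, 0 < s ∧ (∀ i, s * d i ≤ 1) ∧
        ∀ μ ∈ spectrum ℂ (M.map Complex.ofReal), ‖1 + s * μ‖ < 1 := by
      set c : ℝ := 1 + ∑ i, d i with hc
      have hdc : ∀ i, d i ≤ c := by
        intro i
        have h1 : d i ≤ ∑ i, d i :=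
          Finset.single_le_sum (fun j _ => (hd j).le) (Finset.mem_univ i)
        simp only [hc]; linarith
      have hcpos : 0 < c := by
        have : 0 ≤ ∑ i, d i := Finset.sum_nonneg fun j _ => (hd j).le
        simp only [hc]; linarith
      have hsd' : ∀ s : ℝ, s ≤ c⁻¹ → 0 < s → ∀ i, s * d i ≤ 1 := by
        intro s hs hspos i
        calc s * d i ≤ c⁻¹ * c :=
              mul_le_mul hs (hdc i) (hd i).le (inv_nonneg.mpr hcpos.le)
          _ = 1 := inv_mul_cancel₀ hcpos.ne'
      rcases Set.eq_empty_or_nonempty (spectrum ℂ (M.map Complex.ofReal)) with he | hne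
      · exact ⟨c⁻¹, by positivity, hsd' _ le_rfl (by positivity), by simp [he]⟩
      · have hcomp : IsCompact (spectrum ℂ (M.map Complex.ofReal)) := spectrum.isCompact _
        obtain ⟨μ₁, hμ₁m, hmax⟩ := hcomp.exists_isMaxOn hne Complex.continuous_re.continuousOn
        obtain ⟨μ₂, hμ₂m, habsmax⟩ :=
          hcomp.exists_isMaxOn hne continuous_norm.continuousOn
        set a : ℝ := -μ₁.re with ha
        have hapos : 0 < a := by
          have := hR μ₁ hμ₁m
          simp only [ha]; linarith
        set R : ℝ := ‖μ₂‖ with hR2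
        have hRnn : 0 ≤ R := norm_nonneg _
        have hdivpos : 0 < a / (R ^ 2 + 1) := div_pos hapos (by positivity)
        refine ⟨min c⁻¹ (a / (R ^ 2 + 1)), lt_min (by positivity) hdivpos,
          hsd' _ (min_le_left _ _) (lt_min (by positivity) hdivpos), ?_⟩
        set s := min c⁻¹ (a / (R ^ 2 + 1)) with hs
        have hspos : 0 < s := lt_min (by positivity) hdivpos
        intro μ hμm
        have hre : μ.re ≤ -a := by simpa [ha] using hmax hμm
        have habsμ : ‖μ‖ ≤ R := habsmax hμm
        have hsq : (‖1 + s * μ‖) ^ 2 =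
            1 + 2 * s * μ.re + s ^ 2 * (μ.re ^ 2 + μ.im ^ 2) := by
          rw [Complex.sq_norm, Complex.normSq_apply]
          simp only [Complex.add_re, Complex.add_im, Complex.one_re, Complex.one_im,
            Complex.mul_re, Complex.mul_im, Complex.ofReal_re, Complex.ofReal_im]
          ring
        have hμsq : μ.re ^ 2 + μ.im ^ 2 ≤ R ^ 2 := by
          have := Complex.sq_norm μ
          rw [Complex.normSq_apply] at this
          nlinarith [norm_nonneg μ]
        have hsle : s ≤ a / (R ^ 2 + 1) := min_le_right _ _
        have hkey : (‖1 + s * μ‖) ^ 2 < 1 := by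
          rw [hsq]
          have h7 : s * (R ^ 2 + 1) ≤ a := by
            rw [← le_div_iff₀ (by positivity)]
            exact hsle
          nlinarith [sq_nonneg s, hspos]
        nlinarith [norm_nonneg (1 + s * μ)]
    -- build K
    set K : Matrix (Fin n) (Fin n) ℝ := 1 + s • M with hK
    have hKnn : ∀ i j, 0 ≤ K i j := by
      intro i j
      simp only [hK, hM, Matrix.add_apply, Matrix.smul_apply, Matrix.one_apply,
        Matrix.neg_apply, Matrix.diagonal_apply, smul_eq_mul]
      by_cases h : i = j
      · subst h
        have h1 := hsd i
        have h2 := hB i i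
        norm_num
        nlinarith [hs0]
      · simp only [if_neg h, if_neg h]
        have := hB i j
        nlinarith [hs0]
    have hKy : ∀ i, 1 * y i ≤ K.mulVec y i := by
      intro i
      rw [hK, Matrix.add_mulVec, Matrix.one_mulVec, Matrix.smul_mulVec]
      have hMy : -(d i * y i) + B.mulVec y i = M.mulVec y i := by
        rw [hM, Matrix.add_mulVec, Matrix.neg_mulVec]
        simp [Matrix.mulVec_diagonal]
      have h8 : 0 ≤ M.mulVec y i := by
        rw [← hMy]
        linarith [hBy i]
      simp only [Pi.add_apply, Pi.smul_apply, smul_eq_mul, one_mul]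
      nlinarith [hs0]
    obtain ⟨κ, hκm, hκ1⟩ := key K hKnn y (fun i => norm_nonneg _) hy0 one_pos hKy
    -- convert spectrum of K to spectrum of M
    have hKmap : K.map Complex.ofReal = 1 + (s : ℂ) • (M.map Complex.ofReal) := by
      ext i j
      simp only [hK, Matrix.map_apply, Matrix.add_apply, Matrix.smul_apply, Matrix.one_apply,
        smul_eq_mul, Pi.add_apply]
      push_cast
      split_ifs <;> simp
    rw [hKmap] at hκm
    obtain ⟨x₂, hx₂0, hx₂⟩ := (spec_iff _ κ).mp hκm
    have hsC : (s : ℂ) ≠ 0 := Complex.ofReal_ne_zero.mpr hs0.ne'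
    have hMx₂ : (M.map Complex.ofReal).mulVec x₂ = ((κ - 1) / s) • x₂ := by
      funext i
      have h9 := congrFun hx₂ i
      rw [Matrix.add_mulVec, Matrix.one_mulVec, Matrix.smul_mulVec] at h9
      simp only [Pi.add_apply, Pi.smul_apply, smul_eq_mul] at h9 ⊢
      rw [div_mul_eq_mul_div, eq_div_iff hsC]
      linear_combination h9
    have hμ2 : ((κ - 1) / (s : ℂ)) ∈ spectrum ℂ (M.map Complex.ofReal) :=
      (spec_iff _ _).mpr ⟨x₂, hx₂0, hMx₂⟩
    have h10 := hsball _ hμ2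
    rw [show (1 : ℂ) + s * ((κ - 1) / s) = κ by field_simp; ring] at h10
    exact absurd h10 (not_lt.mpr hκ1)

end Stmt8Aux

/-- With `D` diagonal positive and `B ≥ 0`, the spectral radius of
`D⁻¹B` is `< 1` iff the spectral abscissa of `−D + B` is `< 0`. -/
theorem stmt8 (n : ℕ) (d : Fin n → ℝ) (hd : ∀ i, 0 < d i)
    (B : Matrix (Fin n) (Fin n) ℝ) (hB : ∀ i j, 0 ≤ B i j) :
    (∀ μ ∈ spectrum ℂ (((Matrix.diagonal d)⁻¹ * B).map Complex.ofReal),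
        ‖μ‖ < 1) ↔
      (∀ μ ∈ spectrum ℂ ((-(Matrix.diagonal d) + B).map Complex.ofReal),
        μ.re < 0) :=
  stmt8_aux n d hd B hB
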